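/- For the constant-coefficient problem -ε u'' + b u' = f with b > 0 constant and f constant, the Il'in exponentially fitted scheme on a uniform mesh of width h, obtained by replacing ε with the fitted coefficient σ = (bh/2)·coth(bh/(2ε)) in the central difference scheme, produces a discrete solution that coincides with the exact continuous solution at every mesh point. -/

import Mathlib

open Real

set_option maxHeartbeats 2000000 in
theorem stmt_8 (ε b f : ℝ) (hε : 0 < ε) (hb : 0 < b) (N : ℕ) (hN : 2 ≤ N)
    (h : ℝ) (hh : h = 1 / N)
    (σ : ℝ) (hσ : σ = (b * h / 2) * (Real.cosh (b * h / (2 * ε)) / Real.sinh (b * h / (2 * ε))))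
    (u : ℝ → ℝ)
    (hu : ∀ x : ℝ, u x = (f / b) * (x - (Real.exp (b * x / ε) - 1) / (Real.exp (b / ε) - 1)))
    (U : ℕ → ℝ) (hU0 : U 0 = 0) (hUN : U N = 0)
    (hscheme : ∀ i : ℕ, 1 ≤ i → i ≤ N - 1 →
      -σ * (U (i + 1) - 2 * U i + U (i - 1)) / h ^ 2 +
        b * (U (i + 1) - U (i - 1)) / (2 * h) = f) :
    ∀ i : ℕ, i ≤ N → U i = u (i * h) := by
  have hεne : ε ≠ 0 := ne_of_gt hε
  have hbne : b ≠ 0 := ne_of_gt hb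
  have hNR : (0:ℝ) < (N:ℝ) := by
    have : (0:ℕ) < N := by omega
    exact_mod_cast this
  have hh0 : 0 < h := by rw [hh]; positivity
  have hhne : h ≠ 0 := ne_of_gt hh0
  set t : ℝ := b * h / (2 * ε) with htdef
  have ht : 0 < t := by positivity
  have hsinh : 0 < Real.sinh t := Real.sinh_pos_iff.2 ht
  set s : ℝ := Real.exp t with hsdef
  have hs0 : 0 < s := Real.exp_pos t
  have hs1 : 1 < s := Real.one_lt_exp_iff.2 ht
  have hsne : s ≠ 0 := ne_of_gt hs0
  have hsinv : s⁻¹ < s := lt_trans (inv_lt_one_of_one_lt₀ hs1) hs1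
  have hssub : s - s⁻¹ ≠ 0 := ne_of_gt (sub_pos.2 hsinv)
  have hcosh_eq : Real.cosh t = (s + s⁻¹) / 2 := by
    rw [Real.cosh_eq, Real.exp_neg, hsdef]
  have hsinh_eq : Real.sinh t = (s - s⁻¹) / 2 := by
    rw [Real.sinh_eq, Real.exp_neg, hsdef]
  have hD : Real.exp (b / ε) - 1 ≠ 0 := by
    have : 1 < Real.exp (b / ε) := Real.one_lt_exp_iff.2 (by positivity)
    linarith
  have hs2 : s ^ 2 - 1 ≠ 0 := by nlinarith
  have hσ' : σ = (b * h / 2) * ((s + s⁻¹) / (s - s⁻¹)) := by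
    rw [hσ, hcosh_eq, hsinh_eq]
    field_simp [hssub]
  have hσ2 : σ = (b * h / 2) * ((s ^ 2 + 1) / (s ^ 2 - 1)) := by
    have hq : (s + s⁻¹) / (s - s⁻¹) = (s ^ 2 + 1) / (s ^ 2 - 1) := by
      rw [div_eq_div_iff hssub hs2]
      field_simp
    rw [hσ', hq]
  set a : ℝ := σ - b * h / 2 with hadef
  set c : ℝ := σ + b * h / 2 with hcdef
  have hbh : 0 < b * h := mul_pos hb hh0
  have ha : 0 < a := by
    rw [hadef, hσ']
    have h1 : 0 < s - s⁻¹ := sub_pos.2 hsinv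
    have h2 : 1 < (s + s⁻¹) / (s - s⁻¹) := by
      rw [lt_div_iff₀ h1]
      have : 0 < s⁻¹ := by positivity
      linarith
    nlinarith
  have hc : 0 < c := by
    have := ha
    rw [hadef] at this
    rw [hcdef]
    linarith
  have hac : a < c := by
    rw [hadef, hcdef]
    linarith
  -- exp shift identity
  have e0 : s ^ 2 = Real.exp (b * h / ε) := by
    rw [hsdef, sq, ← Real.exp_add, htdef, ← add_div,
      show b * h + b * h = 2 * (b * h) by ring, mul_div_mul_left _ _ (two_ne_zero)]
  have eshift : ∀ x : ℝ, Real.exp (b * (x + h) / ε) = Real.exp (b * x / ε) * s ^ 2 := by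
    intro x
    rw [e0, ← Real.exp_add, ← add_div, mul_add]
  -- the exact solution satisfies the scheme
  have key : ∀ x : ℝ,
      -σ * (u (x + h) - 2 * u x + u (x - h)) / h ^ 2 +
        b * (u (x + h) - u (x - h)) / (2 * h) = f := by
    intro x
    have e1 : Real.exp (b * (x + h) / ε) = Real.exp (b * x / ε) * s ^ 2 := eshift x
    have e3 : Real.exp (b * (x - h) / ε) = Real.exp (b * x / ε) * (s ^ 2)⁻¹ := by
      have e2 := eshift (x - h)
      rw [show x - h + h = x by ring] at e2
      rw [e2]
      field_simp
    have d2 : u (x + h) - 2 * u x + u (x - h) =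
        -(f / b) * Real.exp (b * x / ε) * (s ^ 2 - 1) ^ 2 / (s ^ 2 * (Real.exp (b / ε) - 1)) := by
      rw [hu (x + h), hu x, hu (x - h), e1, e3]
      field_simp [hbne, hsne, hD]
      ring
    have d1 : u (x + h) - u (x - h) =
        (f / b) * (2 * h - Real.exp (b * x / ε) * (s ^ 4 - 1) /
          (s ^ 2 * (Real.exp (b / ε) - 1))) := by
      rw [hu (x + h), hu (x - h), e1, e3]
      field_simp [hbne, hsne, hD]
      ring
    rw [d2, d1, hσ2]
    field_simp [hbne, hsne, hD, hs2, hhne]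
    ring
  -- the difference V
  set V : ℕ → ℝ := fun i => U i - u ((i : ℝ) * h) with hVdef
  have hu0 : u 0 = 0 := by rw [hu 0]; simp
  have hV0 : V 0 = 0 := by simp [hVdef, hU0, hu0]
  have hVN : V N = 0 := by
    have hNh : (N : ℝ) * h = 1 := by rw [hh]; field_simp
    have hu1 : u 1 = 0 := by rw [hu 1]; field_simp; ring
    simp only [hVdef, hNh, hUN, hu1, sub_zero]
  -- homogeneous recurrence for V
  have hrec : ∀ j : ℕ, j + 2 ≤ N → a * V (j + 2) = (a + c) * V (j + 1) - c * V j := by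
    intro j hj
    have hs1' := hscheme (j + 1) (by omega) (by omega)
    have hp1 : j + 1 + 1 = j + 2 := rfl
    have hm1 : j + 1 - 1 = j := rfl
    rw [hp1, hm1] at hs1'
    have hk := key (((j : ℝ) + 1) * h)
    rw [show ((j : ℝ) + 1) * h + h = ((j : ℝ) + 2) * h by ring,
        show ((j : ℝ) + 1) * h - h = (j : ℝ) * h by ring] at hk
    have hdiff : -σ * (V (j + 2) - 2 * V (j + 1) + V j) / h ^ 2 +
        b * (V (j + 2) - V j) / (2 * h) = 0 := by
      simp only [hVdef]
      push_cast
      linear_combination hs1' - hk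
    have hdiff2 : h * (-σ * (V (j + 2) - 2 * V (j + 1) + V j) * 2 +
        b * (V (j + 2) - V j) * h) = 0 := by
      field_simp at hdiff
      linear_combination h * hdiff
    have h3 := (mul_eq_zero.1 hdiff2).resolve_left hhne
    rw [hadef, hcdef]
    linear_combination (-1/2 : ℝ) * h3
  -- explicit solution of the recurrence
  have main : ∀ i : ℕ, i ≤ N → (c - a) * a ^ i * V i = a * (c ^ i - a ^ i) * V 1 := by
    intro i
    induction i using Nat.strong_induction_on with
    | _ i ih =>
      match i with
      | 0 => intro _; simp [hV0]
      | 1 => intro _; ring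
      | (j + 2) =>
        intro hle
        have h1 := ih (j + 1) (by omega) (by omega)
        have h0 := ih j (by omega) (by omega)
        have hr := hrec j hle
        linear_combination (c - a) * a ^ (j + 1) * hr + (a + c) * h1 - c * a * h0
  have hV1 : V 1 = 0 := by
    have hmN := main N (le_refl N)
    rw [hVN, mul_zero] at hmN
    have hpow : a ^ N < c ^ N := pow_lt_pow_left₀ hac (le_of_lt ha) (by omega)
    have hne : a * (c ^ N - a ^ N) ≠ 0 :=
      mul_ne_zero (ne_of_gt ha) (by linarith)
    exact (mul_eq_zero.1 hmN.symm).resolve_left hne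
  intro i hi
  have hmi := main i hi
  rw [hV1, mul_zero] at hmi
  have hane : (c - a) * a ^ i ≠ 0 :=
    mul_ne_zero (ne_of_gt (sub_pos.2 hac)) (ne_of_gt (pow_pos ha i))
  have hVi : V i = 0 := (mul_eq_zero.1 hmi).resolve_left hane
  have : U i - u ((i : ℝ) * h) = 0 := hVi
  linarith
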